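/- (Covering lemma.) Let F ⊆ ℝⁿ be a non-empty set, let a, b, c > 0 be fixed, and let O := {x ∈ ℝⁿ : 0 < d(x,F) ≤ a·m(x)}. There exists a sequence (x_k)_{k≥1} in O such that: (i) O ⊆ ⋃_{k≥1} B(x_k, b·d(x_k,F)); and (ii) Σ_{k≥1} γ(B(x_k, c·d(x_k,F))) ≤ C γ(O), where C depends only on a, b, c, and the dimension n. -/

import Mathlib

open MeasureTheory Metric Set
open scoped ENNReal NNReal BigOperators

noncomputable section

/-- The gaussian measure `dγ(x) = (2π)^{-n/2} exp(-|x|²/2) dx` on `ℝⁿ`. -/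
def gaussMeasure (n : ℕ) : Measure (EuclideanSpace ℝ (Fin n)) :=
  volume.withDensity fun x =>
    ENNReal.ofReal ((2 * Real.pi) ^ (-(n : ℝ) / 2) * Real.exp (-‖x‖ ^ 2 / 2))

/-- `m(x) = min {1, 1/‖x‖}`. -/
def mfun {n : ℕ} (x : EuclideanSpace ℝ (Fin n)) : ℝ :=
  if ‖x‖ ≤ 1 then 1 else ‖x‖⁻¹

/-- Ornstein–Uhlenbeck (Mehler) semigroup `e^{-tL} u (x)`. -/
def mehler (n : ℕ) (u : EuclideanSpace ℝ (Fin n) → ℝ) (t : ℝ)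
    (x : EuclideanSpace ℝ (Fin n)) : ℝ :=
  ∫ y, u (Real.exp (-t) • x + Real.sqrt (1 - Real.exp (-2 * t)) • y) ∂gaussMeasure n

/-- The gaussian conical square function `S_a u (x)`. -/
def Sfun (n : ℕ) (a : ℝ) (u : EuclideanSpace ℝ (Fin n) → ℝ)
    (x : EuclideanSpace ℝ (Fin n)) : ℝ≥0∞ :=
  (∫⁻ t in Set.Ioo (0 : ℝ) (a * mfun x),
      (∫⁻ y in ball x t,
        (gaussMeasure n (ball y t))⁻¹ *
          ENNReal.ofReal ((t * ‖fderiv ℝ (mehler n u (t ^ 2)) y‖) ^ 2) ∂gaussMeasure n) /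
        ENNReal.ofReal t) ^ (1 / 2 : ℝ)

/-- The gaussian non-tangential maximal function `T*_{(A,a)} u (x)`. -/
def Tstar (n : ℕ) (A a : ℝ) (u : EuclideanSpace ℝ (Fin n) → ℝ)
    (x : EuclideanSpace ℝ (Fin n)) : ℝ≥0∞ :=
  ⨆ (y : EuclideanSpace ℝ (Fin n)) (t : ℝ) (_ : dist y x < A * t) (_ : 0 < t)
      (_ : t < a * mfun x),
    ((gaussMeasure n (ball y (A * t)))⁻¹ *
        ∫⁻ z in ball y (A * t), ENNReal.ofReal ((mehler n u (t ^ 2) z) ^ 2) ∂gaussMeasure n) ^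
      (1 / 2 : ℝ)

/-- The admissible (gaussian) Hardy–Littlewood maximal function `M*_a f (x)`. -/
def Mstar (n : ℕ) (a : ℝ) (f : EuclideanSpace ℝ (Fin n) → ℝ)
    (x : EuclideanSpace ℝ (Fin n)) : ℝ≥0∞ :=
  ⨆ (r : ℝ) (_ : 0 < r) (_ : r ≤ a * mfun x),
    (gaussMeasure n (ball x r))⁻¹ *
      ∫⁻ y in ball x r, ENNReal.ofReal |f y| ∂gaussMeasure n

/-- The admissible cone `Γ^{(A,a)}_x(γ)`. -/
def cone (n : ℕ) (A a : ℝ) (x : EuclideanSpace ℝ (Fin n)) :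
    Set (EuclideanSpace ℝ (Fin n) × ℝ) :=
  {p | dist p.1 x < A * p.2 ∧ 0 < p.2 ∧ p.2 < a * mfun x}

/-- The modified admissible cone `Γ̃^{(A,a)}_x(γ)`. -/
def coneT (n : ℕ) (A a : ℝ) (x : EuclideanSpace ℝ (Fin n)) :
    Set (EuclideanSpace ℝ (Fin n) × ℝ) :=
  {p | dist p.1 x < A * p.2 ∧ 0 < p.2 ∧ p.2 < a * mfun p.1}

/-- The dyadic cube `2^{-k}(v + [0,1)ⁿ)` of scale `k`. -/
def dyadicCube (n k : ℕ) (v : Fin n → ℤ) : Set (EuclideanSpace ℝ (Fin n)) :=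
  {x | ∀ i, x i ∈ Set.Ico ((2 : ℝ) ^ (-(k : ℤ)) * v i) ((2 : ℝ) ^ (-(k : ℤ)) * (v i + 1))}

/-- The centre of the dyadic cube `2^{-k}(v + [0,1)ⁿ)`. -/
def cubeCenter (n k : ℕ) (v : Fin n → ℤ) : EuclideanSpace ℝ (Fin n) :=
  WithLp.toLp 2 (fun i => (2 : ℝ) ^ (-(k : ℤ)) * (v i + 1 / 2))

/-- The layers `L_0 = [-1,1)ⁿ`, `L_l = [-2^l,2^l)ⁿ \ [-2^{l-1},2^{l-1})ⁿ`. -/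
def layer (n : ℕ) : ℕ → Set (EuclideanSpace ℝ (Fin n))
  | 0 => {x | ∀ i, x i ∈ Set.Ico (-1 : ℝ) 1}
  | (l + 1) =>
      {x | ∀ i, x i ∈ Set.Ico (-(2 : ℝ) ^ (l + 1)) ((2 : ℝ) ^ (l + 1))} \
        {x | ∀ i, x i ∈ Set.Ico (-(2 : ℝ) ^ l) ((2 : ℝ) ^ l)}

/-- The cube `α ∘ Q` with the same centre as `Q = 2^{-k}(v + [0,1)ⁿ)` and `α` times
its side-length. -/
def scaledCube (n k : ℕ) (v : Fin n → ℤ) (α : ℝ) : Set (EuclideanSpace ℝ (Fin n)) :=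
  {x | ∀ i, x i ∈ Set.Ico (cubeCenter n k v i - α * (2 : ℝ) ^ (-(k : ℤ)) / 2)
      (cubeCenter n k v i + α * (2 : ℝ) ^ (-(k : ℤ)) / 2)}

/-- The Ornstein–Uhlenbeck operator `Lf(x) = -Δf(x) + x·∇f(x)`. -/
def OU (n : ℕ) (f : EuclideanSpace ℝ (Fin n) → ℂ) (x : EuclideanSpace ℝ (Fin n)) : ℂ :=
  -(∑ i : Fin n, iteratedFDeriv ℝ 2 f x ![EuclideanSpace.single i 1, EuclideanSpace.single i 1]) +
    fderiv ℝ f x x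





lemma mfun_pos {n : ℕ} (x : EuclideanSpace ℝ (Fin n)) : 0 < mfun x := by
  unfold mfun; split
  · norm_num
  · next h => exact inv_pos.2 (lt_trans one_pos (not_le.1 h))

lemma mfun_le_one {n : ℕ} (x : EuclideanSpace ℝ (Fin n)) : mfun x ≤ 1 := by
  unfold mfun; split
  · exact le_refl 1
  · next h => exact inv_le_one_of_one_le₀ (not_le.1 h).le

lemma norm_mul_mfun_le_one {n : ℕ} (x : EuclideanSpace ℝ (Fin n)) : ‖x‖ * mfun x ≤ 1 := by
  unfold mfun; split
  · next h => simpa using h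
  · next h =>
    rw [mul_inv_cancel₀]
    exact ne_of_gt (lt_trans one_pos (not_le.1 h))

lemma mfun_ge {n : ℕ} (x : EuclideanSpace ℝ (Fin n)) (t : ℝ) (ht : 1 ≤ t) (h : ‖x‖ ≤ t) :
    1 / t ≤ mfun x := by
  unfold mfun; split
  · exact div_le_one_of_le₀ ht (by linarith)
  · next h1 =>
    rw [one_div]
    exact inv_anti₀ (lt_trans one_pos (not_le.1 h1)) h

lemma mfun_lip {n : ℕ} (x y : EuclideanSpace ℝ (Fin n)) : mfun x ≤ mfun y + dist x y := by
  have hd : ‖y‖ - ‖x‖ ≤ dist x y := by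
    rw [dist_eq_norm, ← norm_sub_rev]
    exact norm_sub_norm_le y x
  have hd0 : 0 ≤ dist x y := dist_nonneg
  unfold mfun
  split
  · -- ‖x‖ ≤ 1
    split
    · linarith
    · next hy =>
      have hy1 : 1 < ‖y‖ := not_le.1 hy
      have h2 : (‖y‖ - 1) / ‖y‖ ≤ ‖y‖ - 1 := div_le_self (by linarith) hy1.le
      have h3 : 1 - ‖y‖⁻¹ = (‖y‖ - 1) / ‖y‖ := by field_simp
      next hx => linarith [hd, h3 ▸ h2, (sub_le_sub_right hd (0:ℝ))]
  · next hx =>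
    have hx1 : 1 < ‖x‖ := not_le.1 hx
    split
    · have : ‖x‖⁻¹ ≤ 1 := inv_le_one_of_one_le₀ hx1.le
      linarith
    · next hy =>
      have hy1 : 1 < ‖y‖ := not_le.1 hy
      rcases le_or_gt ‖y‖ ‖x‖ with h | h
      · have : ‖x‖⁻¹ ≤ ‖y‖⁻¹ := inv_anti₀ (by linarith) h
        linarith
      · have e1 : ‖x‖⁻¹ - ‖y‖⁻¹ = (‖y‖ - ‖x‖) / (‖x‖ * ‖y‖) := by
          field_simp
        have e2 : (‖y‖ - ‖x‖) / (‖x‖ * ‖y‖) ≤ ‖y‖ - ‖x‖ := by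
          apply div_le_self (by linarith)
          nlinarith
        linarith



lemma gauss_ball_compare {n : ℕ} (x z : EuclideanSpace ℝ (Fin n)) {r ρ R K Q : ℝ}
    (hρ : 0 < ρ) (hr0 : 0 < r) (hrQ : r ≤ Q * ρ)
    (hrR : r ≤ R) (hzR : dist x z + ρ ≤ R) (hK1 : R ≤ K) (hK2 : ‖x‖ * R ≤ K) :
    gaussMeasure n (ball x r) ≤
      ENNReal.ofReal (Real.exp (2 * K + K ^ 2) * Q ^ n) * gaussMeasure n (ball z ρ) := by
  have hR0 : 0 < R := lt_of_lt_of_le hr0 hrR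
  have hK0 : 0 < K := lt_of_lt_of_le hR0 hK1
  have hQ0 : 0 < Q := by
    rcases le_or_gt Q 0 with h | h
    · exfalso; nlinarith
    · exact h
  rcases Nat.eq_zero_or_pos n with hn | hn
  · -- trivial: subsingleton space
    subst hn
    haveI : Subsingleton (EuclideanSpace ℝ (Fin 0)) :=
      ⟨fun a b => by ext i; exact Fin.elim0 i⟩
    have hxz : x = z := Subsingleton.elim x z
    have hballs : ball x r = ball z ρ := by
      apply Set.eq_of_subset_of_subset
      · intro w hw; rw [mem_ball]; rw [Subsingleton.elim w z]; simpa using hρ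
      · intro w hw; rw [mem_ball]; rw [Subsingleton.elim w x]; simpa using hr0
    rw [hballs]
    apply le_mul_of_one_le_left (zero_le)
    rw [pow_zero, mul_one, ← ENNReal.ofReal_one]
    exact ENNReal.ofReal_le_ofReal (Real.one_le_exp (by positivity))
  haveI : Nontrivial (EuclideanSpace ℝ (Fin n)) := by
    haveI : Nonempty (Fin n) := Fin.pos_iff_nonempty.mp hn
    exact nontrivial_of_ne (EuclideanSpace.single (Classical.arbitrary (Fin n)) (1:ℝ)) 0 (by
      intro h
      have := congrArg (fun v => ‖v‖) h
      simp [EuclideanSpace.norm_single] at this)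
  have hsub2 : ball x r ⊆ ball x R := ball_subset_ball hrR
  have hsub : ball z ρ ⊆ ball x R := by
    intro w hw
    rw [mem_ball] at hw ⊢
    calc dist w x ≤ dist w z + dist z x := dist_triangle w z x
      _ < ρ + dist z x := by linarith
      _ ≤ R := by rw [dist_comm z x]; linarith
  set cg : ℝ := (2 * Real.pi) ^ (-(n : ℝ) / 2) with hcg
  have hcgpos : 0 < cg := Real.rpow_pos_of_pos (by positivity) _
  set A : ℝ := cg * Real.exp (-‖x‖ ^ 2 / 2) with hA
  have hApos : 0 < A := mul_pos hcgpos (Real.exp_pos _)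
  have upper : ∀ w ∈ ball x R, cg * Real.exp (-‖w‖ ^ 2 / 2) ≤ A * Real.exp K := by
    intro w hw
    have hwd : dist w x < R := mem_ball.1 hw
    have h1 : ‖x‖ - R ≤ ‖w‖ := by
      have := norm_sub_norm_le x w
      rw [← dist_eq_norm, dist_comm] at this
      linarith
    have h2 : ‖x‖ ^ 2 - 2 * K ≤ ‖w‖ ^ 2 := by
      rcases le_or_gt ‖x‖ R with h | h
      · nlinarith [norm_nonneg w, norm_nonneg x]
      · nlinarith [norm_nonneg w]
    rw [hA, mul_assoc, ← Real.exp_add]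
    apply mul_le_mul_of_nonneg_left _ hcgpos.le
    apply Real.exp_le_exp.2
    linarith
  have lower : ∀ w ∈ ball x R, A * Real.exp (-(2 * K + K ^ 2) / 2) ≤ cg * Real.exp (-‖w‖ ^ 2 / 2) := by
    intro w hw
    have hwd : dist w x < R := mem_ball.1 hw
    have h1 : ‖w‖ ≤ ‖x‖ + R := by
      have h0 := norm_sub_norm_le w x
      rw [← dist_eq_norm] at h0
      linarith
    have h2 : ‖w‖ ^ 2 ≤ ‖x‖ ^ 2 + 2 * K + K ^ 2 := by
      nlinarith [norm_nonneg w, norm_nonneg x]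
    rw [hA, mul_assoc, ← Real.exp_add]
    apply mul_le_mul_of_nonneg_left _ hcgpos.le
    apply Real.exp_le_exp.2
    linarith
  have up : gaussMeasure n (ball x r) ≤ ENNReal.ofReal (A * Real.exp K) * volume (ball x r) := by
    rw [gaussMeasure, withDensity_apply _ measurableSet_ball]
    calc ∫⁻ w in ball x r, ENNReal.ofReal (cg * Real.exp (-‖w‖ ^ 2 / 2)) ∂volume
        ≤ ∫⁻ _ in ball x r, ENNReal.ofReal (A * Real.exp K) ∂volume := by
          apply setLIntegral_mono' measurableSet_ball
          intro w hw
          exact ENNReal.ofReal_le_ofReal (upper w (hsub2 hw))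
      _ = ENNReal.ofReal (A * Real.exp K) * volume (ball x r) := setLIntegral_const _ _
  have lo : ENNReal.ofReal (A * Real.exp (-(2 * K + K ^ 2) / 2)) * volume (ball z ρ) ≤
      gaussMeasure n (ball z ρ) := by
    rw [gaussMeasure, withDensity_apply _ measurableSet_ball]
    calc ENNReal.ofReal (A * Real.exp (-(2 * K + K ^ 2) / 2)) * volume (ball z ρ)
        = ∫⁻ _ in ball z ρ, ENNReal.ofReal (A * Real.exp (-(2 * K + K ^ 2) / 2)) ∂volume :=
          (setLIntegral_const _ _).symm
      _ ≤ ∫⁻ w in ball z ρ, ENNReal.ofReal (cg * Real.exp (-‖w‖ ^ 2 / 2)) ∂volume := by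
          apply setLIntegral_mono' measurableSet_ball
          intro w hw
          exact ENNReal.ofReal_le_ofReal (lower w (hsub hw))
  have hvol1 : volume (ball x r) = ENNReal.ofReal (r ^ n) * volume (ball (0:EuclideanSpace ℝ (Fin n)) 1) := by
    rw [Measure.addHaar_ball volume x hr0.le, finrank_euclideanSpace_fin]
  have hvol2 : volume (ball z ρ) = ENNReal.ofReal (ρ ^ n) * volume (ball (0:EuclideanSpace ℝ (Fin n)) 1) := by
    rw [Measure.addHaar_ball volume z hρ.le, finrank_euclideanSpace_fin]
  have hreal : A * Real.exp K * r ^ n ≤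
      Real.exp (2 * K + K ^ 2) * Q ^ n * (A * Real.exp (-(2 * K + K ^ 2) / 2) * ρ ^ n) := by
    have h1 : r ^ n ≤ (Q * ρ) ^ n := pow_le_pow_left₀ hr0.le hrQ n
    have h2 : Real.exp K ≤ Real.exp (2 * K + K ^ 2) * Real.exp (-(2 * K + K ^ 2) / 2) := by
      rw [← Real.exp_add]
      apply Real.exp_le_exp.2
      nlinarith
    calc A * Real.exp K * r ^ n ≤ A * (Real.exp (2 * K + K ^ 2) * Real.exp (-(2 * K + K ^ 2) / 2)) * ((Q * ρ) ^ n) := by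
          apply mul_le_mul (mul_le_mul_of_nonneg_left h2 hApos.le) h1 (by positivity) (by positivity)
      _ = Real.exp (2 * K + K ^ 2) * Q ^ n * (A * Real.exp (-(2 * K + K ^ 2) / 2) * ρ ^ n) := by
          rw [mul_pow]; ring
  calc gaussMeasure n (ball x r)
      ≤ ENNReal.ofReal (A * Real.exp K) * (ENNReal.ofReal (r ^ n) * volume (ball (0:EuclideanSpace ℝ (Fin n)) 1)) := by
        rw [← hvol1]; exact up
    _ = ENNReal.ofReal (A * Real.exp K * r ^ n) * volume (ball (0:EuclideanSpace ℝ (Fin n)) 1) := by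
        rw [ENNReal.ofReal_mul (show (0:ℝ) ≤ A * Real.exp K by positivity)]
        ring
    _ ≤ ENNReal.ofReal (Real.exp (2 * K + K ^ 2) * Q ^ n * (A * Real.exp (-(2 * K + K ^ 2) / 2) * ρ ^ n)) * volume (ball (0:EuclideanSpace ℝ (Fin n)) 1) := by
        exact mul_le_mul_left (ENNReal.ofReal_le_ofReal hreal) _
    _ = ENNReal.ofReal (Real.exp (2 * K + K ^ 2) * Q ^ n) * (ENNReal.ofReal (A * Real.exp (-(2 * K + K ^ 2) / 2)) * (ENNReal.ofReal (ρ ^ n) * volume (ball (0:EuclideanSpace ℝ (Fin n)) 1))) := by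
        rw [ENNReal.ofReal_mul (show (0:ℝ) ≤ Real.exp (2 * K + K ^ 2) * Q ^ n by positivity),
          ENNReal.ofReal_mul (show (0:ℝ) ≤ A * Real.exp (-(2 * K + K ^ 2) / 2) by positivity)]
        ring
    _ ≤ ENNReal.ofReal (Real.exp (2 * K + K ^ 2) * Q ^ n) * gaussMeasure n (ball z ρ) := by
        apply mul_le_mul_right
        rw [← hvol2]
        exact lo




def kappa (a : ℝ) : ℝ := min 1 (min 1 a / (8 * a * (1 + a)))

lemma kappa_pos {a : ℝ} (ha : 0 < a) : 0 < kappa a := by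
  unfold kappa
  apply lt_min one_pos
  positivity

lemma kappa_le_one (a : ℝ) : kappa a ≤ 1 := min_le_left _ _

lemma kappa_le {a : ℝ} : kappa a ≤ min 1 a / (8 * a * (1 + a)) := min_le_right _ _

set_option maxHeartbeats 2000000 in
lemma inner_ball {n : ℕ} {a : ℝ} (ha : 0 < a) (F : Set (EuclideanSpace ℝ (Fin n)))
    (hF : F.Nonempty) {x : EuclideanSpace ℝ (Fin n)}
    (hx0 : 0 < infDist x F) (hxa : infDist x F ≤ a * mfun x) :
    ∃ z, dist x z ≤ infDist x F ∧
      ∀ y, dist y z < kappa a * infDist x F / 2 →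
        (0 < infDist y F ∧ infDist y F ≤ a * mfun y) ∧
          kappa a * infDist x F / 2 ≤ infDist y F ∧ infDist y F ≤ 3 * infDist x F / 2 := by
  set d := infDist x F with hd
  obtain ⟨p, hpF, hpd⟩ := isClosed_closure.exists_infDist_eq_dist hF.closure x
  rw [infDist_closure] at hpd
  -- hpd : d = dist x p
  set μ := mfun p with hμ
  have hμpos := mfun_pos p
  have hmx := mfun_pos x
  have hpnorm : ‖p‖ ≤ ‖x‖ + d := by
    have h0 := norm_sub_norm_le p x
    rw [← dist_eq_norm, dist_comm] at h0
    rw [hd, hpd]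
    linarith
  have key1 : mfun x ≤ (1 + a) * μ := by
    by_cases h1 : ‖x‖ ≤ 1
    · have hmx1 : mfun x = 1 := by unfold mfun; rw [if_pos h1]
      have hda : d ≤ a := by
        have := hxa; rw [hmx1, mul_one] at this; exact this
      have hpn : ‖p‖ ≤ 1 + a := by linarith
      have h2 := mfun_ge p (1 + a) (by linarith) hpn
      rw [hmx1]
      calc (1:ℝ) = (1 + a) * (1 / (1 + a)) := by field_simp
        _ ≤ (1 + a) * μ := mul_le_mul_of_nonneg_left h2 (by linarith)
    · have hx1 : 1 < ‖x‖ := not_le.1 h1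
      have hmx1 : mfun x = ‖x‖⁻¹ := by unfold mfun; rw [if_neg h1]
      have hd_inv : d ≤ a * ‖x‖⁻¹ := by rw [hmx1] at hxa; exact hxa
      have hinv1 : ‖x‖⁻¹ ≤ 1 := inv_le_one_of_one_le₀ hx1.le
      have hpn : ‖p‖ ≤ (1 + a) * ‖x‖ := by nlinarith
      have h4 := mfun_ge p ((1 + a) * ‖x‖) (by nlinarith) hpn
      rw [hmx1]
      calc ‖x‖⁻¹ = (1 + a) * (1 / ((1 + a) * ‖x‖)) := by
            field_simp
        _ ≤ (1 + a) * μ := mul_le_mul_of_nonneg_left h4 (by linarith)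
  have hdμ : d ≤ a * (1 + a) * μ := by
    calc d ≤ a * mfun x := hxa
      _ ≤ a * ((1 + a) * μ) := mul_le_mul_of_nonneg_left key1 ha.le
      _ = a * (1 + a) * μ := by ring
  set η := min d (min 1 a * μ / 8) with hη
  have hmin1a : 0 < min 1 a := lt_min one_pos ha
  have hη_pos : 0 < η := lt_min hx0 (by positivity)
  have hη_le_d : η ≤ d := min_le_left _ _
  have hη_le : η ≤ min 1 a * μ / 8 := min_le_right _ _
  have hκd : kappa a * d ≤ η := by
    apply le_min
    · calc kappa a * d ≤ 1 * d := mul_le_mul_of_nonneg_right (kappa_le_one a) hx0.le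
        _ = d := one_mul d
    · calc kappa a * d ≤ (min 1 a / (8 * a * (1 + a))) * (a * (1 + a) * μ) :=
            mul_le_mul kappa_le hdμ hx0.le (by positivity)
        _ = min 1 a * μ / 8 := by field_simp
  have hd0 : d ≠ 0 := ne_of_gt hx0
  set co := (d - η) / d with hco
  have hco0 : 0 ≤ co := by
    apply div_nonneg (by linarith) hx0.le
  set z := x + co • (p - x) with hz
  have hxp : ‖p - x‖ = d := by
    rw [← dist_eq_norm, dist_comm, ← hpd]
  have hz1 : dist x z = d - η := by
    rw [dist_eq_norm]
    have e : x - z = -(co • (p - x)) := by rw [hz]; module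
    rw [e, norm_neg, norm_smul, hxp, Real.norm_eq_abs, abs_of_nonneg hco0, hco]
    field_simp
  have hz2 : dist z p = η := by
    rw [dist_eq_norm]
    have e : z - p = -((1 - co) • (p - x)) := by rw [hz]; module
    have h1co : 1 - co = η / d := by rw [hco]; field_simp; ring
    rw [e, norm_neg, norm_smul, hxp, Real.norm_eq_abs, h1co,
      abs_of_nonneg (by positivity : (0:ℝ) ≤ η / d)]
    field_simp
  refine ⟨z, by rw [hz1]; linarith, ?_⟩
  intro y hy
  have hκpos := kappa_pos ha
  have hκd2 : kappa a * d / 2 ≤ η / 2 := by linarith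
  have hdzF : η ≤ infDist z F := by
    have h0 : infDist x F ≤ infDist z F + dist x z := infDist_le_infDist_add_dist
    rw [hz1, ← hd] at h0
    linarith
  have hyF_lb : kappa a * d / 2 ≤ infDist y F ∧ 0 < infDist y F := by
    have h0 : infDist z F ≤ infDist y F + dist z y := infDist_le_infDist_add_dist
    rw [dist_comm] at h0
    constructor
    · linarith
    · have : 0 < kappa a * d / 2 := by positivity
      linarith
  have hyp : dist y p ≤ 3 * η / 2 := by
    calc dist y p ≤ dist y z + dist z p := dist_triangle y z p
      _ ≤ kappa a * d / 2 + η := by rw [hz2]; linarith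
      _ ≤ 3 * η / 2 := by linarith
  have hyF_ub : infDist y F ≤ 3 * η / 2 := by
    have h0 : infDist y F ≤ dist y p := by
      rw [← infDist_closure]
      exact infDist_le_dist_of_mem hpF
    linarith
  have hmy : μ - 3 * η / 2 ≤ mfun y := by
    have h0 := mfun_lip p y
    rw [dist_comm] at h0
    linarith
  have hημ : η ≤ μ / 8 := by
    have hm1 : min 1 a ≤ 1 := min_le_left 1 a
    nlinarith
  have hμ2 : μ / 2 ≤ mfun y := by linarith
  have hbound : infDist y F ≤ a * mfun y := by
    have h1 : infDist y F ≤ 3 * (min 1 a * μ / 8) / 2 := by linarith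
    have h2 : 3 * (min 1 a * μ / 8) / 2 ≤ 3 * (a * μ / 8) / 2 := by
      have : min 1 a ≤ a := min_le_right 1 a
      nlinarith
    have h3 : 3 * (a * μ / 8) / 2 ≤ a * (μ / 2) := by nlinarith
    have h4 : a * (μ / 2) ≤ a * mfun y := mul_le_mul_of_nonneg_left hμ2 ha.le
    linarith
  exact ⟨⟨hyF_lb.2, hbound⟩, hyF_lb.1, by linarith⟩

lemma coord_le_dist {n : ℕ} (u w : EuclideanSpace ℝ (Fin n)) (i : Fin n) :
    |u i - w i| ≤ dist u w := by
  rw [EuclideanSpace.dist_eq, ← Real.dist_eq]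
  rw [show dist (u i) (w i) = Real.sqrt (dist (u i) (w i) ^ 2) from
    (Real.sqrt_sq dist_nonneg).symm]
  apply Real.sqrt_le_sqrt
  exact Finset.single_le_sum (f := fun i => dist (u i) (w i) ^ 2)
    (fun i _ => sq_nonneg _) (Finset.mem_univ i)

lemma net_dist {n : ℕ} (x : EuclideanSpace ℝ (Fin n)) (σ : ℝ) (hσ : 0 < σ) :
    dist x (show EuclideanSpace ℝ (Fin n) from WithLp.toLp 2 (fun i => σ * (round (x i / σ) : ℝ))) ≤
      (n + 1) * σ / 2 := by
  rw [EuclideanSpace.dist_eq]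
  have hcoord : ∀ i : Fin n,
      dist (x i) (σ * (round (x i / σ) : ℝ)) ^ 2 ≤ (σ / 2) ^ 2 := by
    intro i
    have h1 : |x i / σ - (round (x i / σ) : ℝ)| ≤ 1 / 2 := abs_sub_round _
    have h2 : dist (x i) (σ * (round (x i / σ) : ℝ)) = σ * |x i / σ - (round (x i / σ) : ℝ)| := by
      rw [Real.dist_eq, show x i - σ * (round (x i / σ) : ℝ) = σ * (x i / σ - (round (x i / σ) : ℝ)) by
        field_simp, abs_mul, abs_of_pos hσ]
    rw [h2]
    have h3 : σ * |x i / σ - (round (x i / σ) : ℝ)| ≤ σ / 2 := by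
      calc σ * |x i / σ - (round (x i / σ) : ℝ)| ≤ σ * (1 / 2) :=
            mul_le_mul_of_nonneg_left h1 hσ.le
        _ = σ / 2 := by ring
    have h4 : 0 ≤ σ * |x i / σ - (round (x i / σ) : ℝ)| := by positivity
    nlinarith
  calc Real.sqrt (∑ i, dist (x i) ((show EuclideanSpace ℝ (Fin n) from
          WithLp.toLp 2 (fun i => σ * (round (x i / σ) : ℝ))) i) ^ 2)
      ≤ Real.sqrt (∑ _i : Fin n, (σ / 2) ^ 2) := by
        apply Real.sqrt_le_sqrt
        exact Finset.sum_le_sum fun i _ => hcoord i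
    _ = Real.sqrt (n * (σ / 2) ^ 2) := by rw [Finset.sum_const, Finset.card_univ,
        Fintype.card_fin, nsmul_eq_mul]
    _ ≤ Real.sqrt (((n + 1) * σ / 2) ^ 2) := by
        apply Real.sqrt_le_sqrt
        have he : ((n:ℝ) + 1) * σ / 2 = (n + 1) * (σ / 2) := by ring
        rw [he, mul_pow]
        have hn : (n:ℝ) ≤ ((n:ℝ) + 1) ^ 2 := by nlinarith [Nat.cast_nonneg (α := ℝ) n]
        exact mul_le_mul_of_nonneg_right hn (sq_nonneg (σ / 2))
    _ = (n + 1) * σ / 2 := Real.sqrt_sq (by positivity)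


set_option maxHeartbeats 2000000 in
/-- covering lemma. For `O = {x : 0 < d(x,F) ≤ a·m(x)}` there is a countable
family of points of `O` such that the balls `B(x_k, b·d(x_k,F))` cover `O` while the total
gaussian measure of the balls `B(x_k, c·d(x_k,F))` is controlled by `γ(O)`. -/
theorem gaussian_covering_lemma (n : ℕ) (a b c : ℝ) (ha : 0 < a) (hb : 0 < b) (hc : 0 < c) :
    ∃ C > (0 : ℝ), ∀ F : Set (EuclideanSpace ℝ (Fin n)), F.Nonempty →
      ∃ s : Set (EuclideanSpace ℝ (Fin n)), s.Countable ∧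
        s ⊆ {x | 0 < infDist x F ∧ infDist x F ≤ a * mfun x} ∧
        ({x | 0 < infDist x F ∧ infDist x F ≤ a * mfun x} ⊆
          ⋃ x ∈ s, ball x (b * infDist x F)) ∧
        ∑' x : s, gaussMeasure n
            (ball (x : EuclideanSpace ℝ (Fin n)) (c * infDist (x : EuclideanSpace ℝ (Fin n)) F))
          ≤ ENNReal.ofReal C *
            gaussMeasure n {x | 0 < infDist x F ∧ infDist x F ≤ a * mfun x} := by
  classical
  have hκ : 0 < kappa a := kappa_pos ha
  have hκ1 : kappa a ≤ 1 := kappa_le_one a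
  set K : ℝ := (c + 2) * a with hKdef
  obtain ⟨Δ, hΔ⟩ : ∃ Δ : ℕ, 1 / kappa a ≤ 2 ^ Δ := by
    obtain ⟨Δ, h⟩ := pow_unbounded_of_one_lt (1 / kappa a) one_lt_two
    exact ⟨Δ, h.le⟩
  set M : ℝ := 4 * (n + 1) * (3 + b / 4) / b with hMdef
  have hM0 : 0 < M := by positivity
  set M' : ℕ := (⌊M⌋ + 1).toNat with hM'def
  have hM'0 : 0 < M' := by
    have h1 : (0:ℤ) ≤ ⌊M⌋ := Int.floor_nonneg.2 hM0.le
    rw [hM'def]; omega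
  set Nn : ℕ := (Δ + 3) * M' ^ n with hNndef
  have hNn0 : 0 < Nn := by
    apply Nat.mul_pos (by omega) (Nat.pow_pos hM'0)
  set C₁ : ℝ := Real.exp (2 * K + K ^ 2) * (2 * c / kappa a) ^ n with hC₁def
  have hC₁0 : 0 < C₁ := by positivity
  refine ⟨C₁ * Nn, by positivity, ?_⟩
  intro F hF
  set O : Set (EuclideanSpace ℝ (Fin n)) :=
    {x | 0 < infDist x F ∧ infDist x F ≤ a * mfun x} with hOdef
  have hOmeas : MeasurableSet O := by
    have hcont : Continuous (fun x : EuclideanSpace ℝ (Fin n) => infDist x F) :=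
      continuous_infDist_pt F
    have hmm : Measurable (fun x : EuclideanSpace ℝ (Fin n) => mfun x) := by
      unfold mfun
      exact Measurable.ite (measurableSet_le measurable_norm measurable_const)
        measurable_const measurable_norm.inv
    exact (measurableSet_lt measurable_const hcont.measurable).inter
      (measurableSet_le hcont.measurable (hmm.const_mul a))
  set σ : ℤ → ℝ := fun k => b * (2:ℝ) ^ k / (2 * (n + 1)) with hσdef
  have hσ : ∀ k, 0 < σ k := by
    intro k
    have : (0:ℝ) < (2:ℝ) ^ k := zpow_pos (by norm_num) k
    rw [hσdef]
    positivity
  set q : (ℤ × (Fin n → ℤ)) → EuclideanSpace ℝ (Fin n) :=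
    fun j => (WithLp.toLp 2 (fun i => σ j.1 * (j.2 i : ℝ)) : EuclideanSpace ℝ (Fin n)) with hqdef
  set S : (ℤ × (Fin n → ℤ)) → Set (EuclideanSpace ℝ (Fin n)) :=
    fun j => {x | x ∈ O ∧ (2:ℝ) ^ j.1 ≤ infDist x F ∧ infDist x F < (2:ℝ) ^ (j.1 + 1) ∧
      dist x (q j) ≤ b * (2:ℝ) ^ j.1 / 4} with hSdef
  set pick : (ℤ × (Fin n → ℤ)) → EuclideanSpace ℝ (Fin n) :=
    fun j => if h : (S j).Nonempty then h.choose else 0 with hpickdef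
  have hpick : ∀ j, (S j).Nonempty → pick j ∈ S j := by
    intro j h
    rw [hpickdef]
    simp only [dif_pos h]
    exact h.choose_spec
  set J : Set (ℤ × (Fin n → ℤ)) := {j | (S j).Nonempty} with hJdef
  set s : Set (EuclideanSpace ℝ (Fin n)) := pick '' J with hsdef
  have hzex : ∀ j : ℤ × (Fin n → ℤ), ∃ z : EuclideanSpace ℝ (Fin n), j ∈ J →
      (dist (pick j) z ≤ infDist (pick j) F ∧
        ∀ y, dist y z < kappa a * infDist (pick j) F / 2 →
          (0 < infDist y F ∧ infDist y F ≤ a * mfun y) ∧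
            kappa a * infDist (pick j) F / 2 ≤ infDist y F ∧
              infDist y F ≤ 3 * infDist (pick j) F / 2) := by
    intro j
    by_cases hj : j ∈ J
    · obtain ⟨z, h1, h2⟩ := inner_ball ha F hF (hpick j hj).1.1 (hpick j hj).1.2
      exact ⟨z, fun _ => ⟨h1, h2⟩⟩
    · exact ⟨0, fun h => absurd h hj⟩
  choose zf hzf using hzex
  set T : (ℤ × (Fin n → ℤ)) → Set (EuclideanSpace ℝ (Fin n)) :=
    fun j => if j ∈ J then ball (zf j) (kappa a * infDist (pick j) F / 2) else ∅ with hTdef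
  have hTmeas : ∀ j, MeasurableSet (T j) := by
    intro j
    by_cases hj : j ∈ J
    · rw [hTdef]; simp only [if_pos hj]; exact measurableSet_ball
    · rw [hTdef]; simp only [if_neg hj]; exact MeasurableSet.empty
  have hTsubO : ∀ j, T j ⊆ O := by
    intro j y hy
    by_cases hj : j ∈ J
    · rw [hTdef] at hy; simp only [if_pos hj] at hy
      exact ((hzf j hj).2 y (mem_ball.1 hy)).1
    · rw [hTdef] at hy; simp only [if_neg hj] at hy
      exact absurd hy (notMem_empty y)
  refine ⟨s, (Set.to_countable J).image pick, ?_, ?_, ?_⟩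
  · rintro x ⟨j, hj, rfl⟩
    exact (hpick j hj).1
  · -- covering
    intro x hx
    set k : ℤ := Int.log 2 (infDist x F) with hkdef
    have h2k : (2:ℝ) ^ k ≤ infDist x F := by
      have := Int.zpow_log_le_self (b := 2) one_lt_two hx.1
      push_cast at this
      exact this
    have h2k' : infDist x F < (2:ℝ) ^ (k + 1) := by
      have := Int.lt_zpow_succ_log_self (b := 2) one_lt_two (infDist x F)
      push_cast at this
      exact this
    set v : Fin n → ℤ := fun i => round (x i / σ k) with hvdef
    have hdq : dist x (q (k, v)) ≤ b * (2:ℝ) ^ k / 4 := by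
      have hnet := net_dist x (σ k) (hσ k)
      have heq : ((n:ℝ) + 1) * σ k / 2 = b * (2:ℝ) ^ k / 4 := by
        rw [hσdef]
        have h2kpos : (0:ℝ) < (2:ℝ) ^ k := zpow_pos (by norm_num) k
        field_simp
        ring
      rw [heq] at hnet
      exact hnet
    have hSne : (S (k, v)).Nonempty := ⟨x, hx, h2k, h2k', hdq⟩
    have hp := hpick _ hSne
    refine mem_iUnion₂.2 ⟨pick (k, v), ⟨(k, v), hSne, rfl⟩, ?_⟩
    rw [mem_ball]
    have h2kpos : (0:ℝ) < (2:ℝ) ^ k := zpow_pos (by norm_num) k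
    calc dist x (pick (k, v)) ≤ dist x (q (k, v)) + dist (pick (k, v)) (q (k, v)) :=
          dist_triangle_right _ _ _
      _ ≤ b * (2:ℝ) ^ k / 4 + b * (2:ℝ) ^ k / 4 := add_le_add hdq hp.2.2.2
      _ < b * (2:ℝ) ^ k := by nlinarith
      _ ≤ b * infDist (pick (k, v)) F := mul_le_mul_of_nonneg_left hp.2.1 hb.le
  · -- sum bound
    set g : EuclideanSpace ℝ (Fin n) → ℝ≥0∞ :=
      fun x => gaussMeasure n (ball x (c * infDist x F)) with hgdef
    set h : (ℤ × (Fin n → ℤ)) → ℝ≥0∞ :=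
      fun j => if j ∈ J then g (pick j) else 0 with hhdef
    have step1 : ∑' x : s, g ↑x ≤ ∑' j : ℤ × (Fin n → ℤ), h j := by
      have hsurj : Function.Surjective
          (fun j : J => (⟨pick ↑j, ⟨↑j, j.2, rfl⟩⟩ : s)) := by
        rintro ⟨y, j, hj, rfl⟩
        exact ⟨⟨j, hj⟩, rfl⟩
      calc ∑' x : s, g ↑x ≤ ∑' j : J, g (pick ↑j) :=
            ENNReal.tsum_le_tsum_comp_of_surjective hsurj (fun x : s => g ↑x)
        _ = ∑' j : J, h ↑j := tsum_congr fun j => by rw [hhdef]; simp only [if_pos j.2]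
        _ ≤ ∑' j : ℤ × (Fin n → ℤ), h j :=
            ENNReal.tsum_comp_le_tsum_of_injective Subtype.val_injective h
    have step2 : ∀ j, h j ≤ ENNReal.ofReal C₁ * gaussMeasure n (T j) := by
      intro j
      rw [hhdef, hTdef]
      by_cases hj : j ∈ J
      · simp only [if_pos hj]
        have hp := hpick j hj
        have hdj0 : 0 < infDist (pick j) F := hp.1.1
        have hdja : infDist (pick j) F ≤ a * mfun (pick j) := hp.1.2
        have hz1 := (hzf j hj).1
        have hm1 := mfun_le_one (pick j)
        have hm2 := norm_mul_mfun_le_one (pick j)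
        have hnn := norm_nonneg (pick j)
        rw [hgdef, hC₁def]
        apply gauss_ball_compare (pick j) (zf j) (R := (c + 2) * infDist (pick j) F)
        · positivity
        · positivity
        · apply le_of_eq
          field_simp
        · nlinarith
        · nlinarith
        · rw [hKdef]
          have hda : infDist (pick j) F ≤ a := by
            nlinarith [mul_le_mul_of_nonneg_left hm1 ha.le]
          exact mul_le_mul_of_nonneg_left hda (by linarith)
        · rw [hKdef]
          have hnd : ‖pick j‖ * infDist (pick j) F ≤ a := by
            nlinarith [mul_le_mul_of_nonneg_left hdja hnn,
              mul_le_mul_of_nonneg_left hm2 ha.le]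
          nlinarith [mul_le_mul_of_nonneg_left hnd (show (0:ℝ) ≤ c + 2 by linarith)]
      · simp only [if_neg hj]
        exact zero_le
    have key : ∀ y : EuclideanSpace ℝ (Fin n),
        ∑' j : ℤ × (Fin n → ℤ), (T j).indicator (fun _ => (1:ℝ≥0∞)) y ≤
          (Nn : ℝ≥0∞) * O.indicator (fun _ => (1:ℝ≥0∞)) y := by
      intro y
      by_cases hyO : y ∈ O
      · rw [indicator_of_mem hyO, mul_one]
        have hdy0 : 0 < infDist y F := hyO.1
        set k₀ : ℤ := Int.log 2 (infDist y F) with hk₀def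
        have hdy1 : (2:ℝ) ^ k₀ ≤ infDist y F := by
          have := Int.zpow_log_le_self (b := 2) one_lt_two hdy0
          push_cast at this; exact this
        have hdy2 : infDist y F < (2:ℝ) ^ (k₀ + 1) := by
          have := Int.lt_zpow_succ_log_self (b := 2) one_lt_two (infDist y F)
          push_cast at this; exact this
        set box : ℤ → Finset (Fin n → ℤ) := fun k =>
          Fintype.piFinset (fun i => Finset.Icc
            ⌈(y i - (3 + b / 4) * (2:ℝ) ^ k) / σ k⌉ ⌊(y i + (3 + b / 4) * (2:ℝ) ^ k) / σ k⌋)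
          with hboxdef
        set 𝒦 : Finset (ℤ × (Fin n → ℤ)) :=
          (Finset.Icc (k₀ - 1) (k₀ + Δ + 1)).biUnion (fun k => ({k} : Finset ℤ) ×ˢ box k)
          with h𝒦def
        have hmem𝒦 : ∀ j : ℤ × (Fin n → ℤ), y ∈ T j → j ∈ 𝒦 := by
          rintro ⟨k, v⟩ hmem
          have hj : (k, v) ∈ J := by
            by_contra hj
            rw [hTdef] at hmem
            simp only [if_neg hj] at hmem
            exact absurd hmem (notMem_empty y)
          rw [hTdef] at hmem
          simp only [if_pos hj] at hmem
          have hp := hpick _ hj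
          have hdj0 : 0 < infDist (pick (k, v)) F := hp.1.1
          have hz2 := (hzf _ hj).2 y (mem_ball.1 hmem)
          have hdj1 : (2:ℝ) ^ k ≤ infDist (pick (k, v)) F := hp.2.1
          have hdj2 : infDist (pick (k, v)) F < (2:ℝ) ^ (k + 1) := hp.2.2.1
          have h2kpos : (0:ℝ) < (2:ℝ) ^ k := zpow_pos (by norm_num) k
          have hzpow1 : (2:ℝ) ^ (k + 1) = (2:ℝ) ^ k * 2 := by
            rw [zpow_add_one₀ (by norm_num : (2:ℝ) ≠ 0)]
          have hk_lb : k₀ - 1 ≤ k := by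
            by_contra hcon
            push_neg at hcon
            have hle : k + 2 ≤ k₀ := by omega
            have h5 : (2:ℝ) ^ (k + 2) ≤ (2:ℝ) ^ k₀ :=
              zpow_le_zpow_right₀ (by norm_num) hle
            have hzpow2 : (2:ℝ) ^ (k + 2) = (2:ℝ) ^ k * 4 := by
              rw [show k + 2 = (k + 1) + 1 by ring, zpow_add_one₀ (by norm_num : (2:ℝ) ≠ 0),
                hzpow1]
              ring
            have h6 : infDist y F ≤ 3 * infDist (pick (k, v)) F / 2 := hz2.2.2
            nlinarith
          have hk_ub : k ≤ k₀ + Δ + 1 := by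
            by_contra hcon
            push_neg at hcon
            have hle : k₀ + Δ + 2 ≤ k := by omega
            have h5 : (2:ℝ) ^ (k₀ + (Δ:ℤ) + 2) ≤ (2:ℝ) ^ k :=
              zpow_le_zpow_right₀ (by norm_num) (by exact_mod_cast hle)
            have h6 : kappa a * infDist (pick (k, v)) F / 2 ≤ infDist y F := hz2.2.1
            have h7 : infDist (pick (k, v)) F ≤ 2 / kappa a * infDist y F := by
              rw [div_mul_eq_mul_div, le_div_iff₀ hκ]
              nlinarith
            have h8 : 2 / kappa a ≤ 2 * 2 ^ Δ := by
              rw [div_le_iff₀ hκ] at hΔ ⊢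
              nlinarith
            have hzpow3 : (2:ℝ) ^ (k₀ + (Δ:ℤ) + 2) = (2:ℝ) ^ (k₀ + 1) * (2:ℝ) ^ (Δ:ℤ) * 2 := by
              rw [← zpow_add₀ (by norm_num : (2:ℝ) ≠ 0), ← zpow_add_one₀ (by norm_num : (2:ℝ) ≠ 0)]
              ring_nf
            have hzpow4 : (2:ℝ) ^ (Δ:ℤ) = (2:ℝ) ^ Δ := zpow_natCast 2 Δ
            have h2Δpos : (0:ℝ) < 2 ^ Δ := by positivity
            have h2k₀pos : (0:ℝ) < (2:ℝ) ^ (k₀ + 1) := zpow_pos (by norm_num) _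
            have hchain : (2:ℝ) ^ k < (2:ℝ) ^ (k₀ + (Δ:ℤ) + 2) := by
              rw [hzpow3, hzpow4]
              calc (2:ℝ) ^ k ≤ infDist (pick (k, v)) F := hdj1
                _ ≤ 2 / kappa a * infDist y F := h7
                _ ≤ 2 * 2 ^ Δ * infDist y F := by nlinarith
                _ < 2 * 2 ^ Δ * (2:ℝ) ^ (k₀ + 1) := by nlinarith
                _ = (2:ℝ) ^ (k₀ + 1) * (2:ℝ) ^ Δ * 2 := by ring
            linarith
          have hdyq : dist y (q (k, v)) ≤ (3 + b / 4) * (2:ℝ) ^ k := by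
            have ht4 := dist_triangle4 y (zf (k, v)) (pick (k, v)) (q (k, v))
            have h1 : dist y (zf (k, v)) < kappa a * infDist (pick (k, v)) F / 2 :=
              mem_ball.1 hmem
            have h2 : dist (zf (k, v)) (pick (k, v)) ≤ infDist (pick (k, v)) F := by
              rw [dist_comm]; exact (hzf _ hj).1
            have h3 : dist (pick (k, v)) (q (k, v)) ≤ b * (2:ℝ) ^ k / 4 := hp.2.2.2
            have hκd : kappa a * infDist (pick (k, v)) F / 2 ≤ infDist (pick (k, v)) F / 2 := by
              nlinarith
            nlinarith
          refine Finset.mem_biUnion.2 ⟨k, Finset.mem_Icc.2 ⟨hk_lb, hk_ub⟩, ?_⟩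
          refine Finset.mem_product.2 ⟨Finset.mem_singleton_self k, ?_⟩
          rw [hboxdef]
          rw [Fintype.mem_piFinset]
          intro i
          have hqi : q (k, v) i = σ k * (v i : ℝ) := rfl
          have hcoord : |y i - σ k * (v i : ℝ)| ≤ (3 + b / 4) * (2:ℝ) ^ k := by
            rw [← hqi]
            exact (coord_le_dist y (q (k, v)) i).trans hdyq
          have habs := abs_le.1 hcoord
          rw [Finset.mem_Icc]
          constructor
          · rw [Int.ceil_le, div_le_iff₀ (hσ k)]
            have := habs.2
            nlinarith [mul_comm (σ k) ((v i : ℝ))]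
          · rw [Int.le_floor, le_div_iff₀ (hσ k)]
            have := habs.1
            nlinarith [mul_comm (σ k) ((v i : ℝ))]
        have hcard : 𝒦.card ≤ Nn := by
          have hboxcard : ∀ k : ℤ, (box k).card ≤ M' ^ n := by
            intro k
            rw [hboxdef]
            rw [Fintype.card_piFinset]
            have hic : ∀ i : Fin n, (Finset.Icc
                ⌈(y i - (3 + b / 4) * (2:ℝ) ^ k) / σ k⌉
                ⌊(y i + (3 + b / 4) * (2:ℝ) ^ k) / σ k⌋).card ≤ M' := by
              intro i
              rw [Int.card_Icc]
              rw [hM'def]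
              apply Int.toNat_le_toNat
              have hfl : (⌊(y i + (3 + b / 4) * (2:ℝ) ^ k) / σ k⌋ : ℝ) ≤
                  (y i + (3 + b / 4) * (2:ℝ) ^ k) / σ k := Int.floor_le _
              have hcl : (y i - (3 + b / 4) * (2:ℝ) ^ k) / σ k ≤
                  (⌈(y i - (3 + b / 4) * (2:ℝ) ^ k) / σ k⌉ : ℝ) := Int.le_ceil _
              have hwidth : (y i + (3 + b / 4) * (2:ℝ) ^ k) / σ k -
                  (y i - (3 + b / 4) * (2:ℝ) ^ k) / σ k = M := by
                rw [hσdef, hMdef]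
                have h2kpos : (0:ℝ) < (2:ℝ) ^ k := zpow_pos (by norm_num) k
                field_simp
                ring
              have hle : (⌊(y i + (3 + b / 4) * (2:ℝ) ^ k) / σ k⌋ : ℤ) -
                  ⌈(y i - (3 + b / 4) * (2:ℝ) ^ k) / σ k⌉ ≤ ⌊M⌋ := by
                apply Int.le_floor.2
                push_cast
                linarith
              omega
            calc (∏ i : Fin n, (Finset.Icc
                ⌈(y i - (3 + b / 4) * (2:ℝ) ^ k) / σ k⌉
                ⌊(y i + (3 + b / 4) * (2:ℝ) ^ k) / σ k⌋).card)
                ≤ ∏ _i : Fin n, M' := Finset.prod_le_prod' fun i _ => hic i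
              _ = M' ^ n := by rw [Finset.prod_const, Finset.card_univ, Fintype.card_fin]
          calc 𝒦.card ≤ ∑ k ∈ Finset.Icc (k₀ - 1) (k₀ + Δ + 1),
                (({k} : Finset ℤ) ×ˢ box k).card := Finset.card_biUnion_le
            _ ≤ ∑ _k ∈ Finset.Icc (k₀ - 1) (k₀ + Δ + 1), M' ^ n := by
                apply Finset.sum_le_sum
                intro k _
                rw [Finset.card_product, Finset.card_singleton, one_mul]
                exact hboxcard k
            _ = (Finset.Icc (k₀ - 1) (k₀ + Δ + 1)).card * M' ^ n := by
                rw [Finset.sum_const, smul_eq_mul]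
            _ = Nn := by
                rw [Int.card_Icc, hNndef]
                congr 1
                omega
        calc ∑' j : ℤ × (Fin n → ℤ), (T j).indicator (fun _ => (1:ℝ≥0∞)) y
            = ∑ j ∈ 𝒦, (T j).indicator (fun _ => (1:ℝ≥0∞)) y :=
              tsum_eq_sum fun j hj =>
                indicator_of_notMem (fun hmem => hj (hmem𝒦 j hmem)) _
          _ ≤ ∑ _j ∈ 𝒦, 1 := Finset.sum_le_sum fun j _ => by
              rw [Set.indicator_apply]
              split
              · exact le_refl _
              · exact zero_le
          _ = (𝒦.card : ℝ≥0∞) := by rw [Finset.sum_const, nsmul_eq_mul, mul_one]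
          _ ≤ (Nn : ℝ≥0∞) := by exact_mod_cast Nat.cast_le.2 hcard
      · have hzero : ∀ j, (T j).indicator (fun _ => (1:ℝ≥0∞)) y = 0 := by
          intro j
          apply indicator_of_notMem
          intro hmem
          exact hyO (hTsubO j hmem)
        calc ∑' j : ℤ × (Fin n → ℤ), (T j).indicator (fun _ => (1:ℝ≥0∞)) y
            = ∑' _j : ℤ × (Fin n → ℤ), (0:ℝ≥0∞) := tsum_congr hzero
          _ = 0 := tsum_zero
          _ ≤ _ := zero_le
    have step3 : ∑' j : ℤ × (Fin n → ℤ), gaussMeasure n (T j) ≤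
        (Nn : ℝ≥0∞) * gaussMeasure n O := by
      calc ∑' j : ℤ × (Fin n → ℤ), gaussMeasure n (T j)
          = ∑' j : ℤ × (Fin n → ℤ),
              ∫⁻ y, (T j).indicator (fun _ => (1:ℝ≥0∞)) y ∂(gaussMeasure n) :=
            tsum_congr fun j => by
              rw [lintegral_indicator_const (hTmeas j), one_mul]
        _ = ∫⁻ y, ∑' j : ℤ × (Fin n → ℤ),
              (T j).indicator (fun _ => (1:ℝ≥0∞)) y ∂(gaussMeasure n) :=
            (lintegral_tsum fun j =>
              ((measurable_const.indicator (hTmeas j)).aemeasurable)).symm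
        _ ≤ ∫⁻ y, (Nn : ℝ≥0∞) * O.indicator (fun _ => (1:ℝ≥0∞)) y ∂(gaussMeasure n) :=
            lintegral_mono key
        _ = (Nn : ℝ≥0∞) * ∫⁻ y, O.indicator (fun _ => (1:ℝ≥0∞)) y ∂(gaussMeasure n) :=
            lintegral_const_mul _ (measurable_const.indicator hOmeas)
        _ = (Nn : ℝ≥0∞) * gaussMeasure n O := by
            rw [lintegral_indicator_const hOmeas, one_mul]
    calc ∑' x : s, gaussMeasure n (ball (x : EuclideanSpace ℝ (Fin n))
            (c * infDist (x : EuclideanSpace ℝ (Fin n)) F))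
        ≤ ∑' j : ℤ × (Fin n → ℤ), h j := step1
      _ ≤ ∑' j : ℤ × (Fin n → ℤ), ENNReal.ofReal C₁ * gaussMeasure n (T j) :=
          ENNReal.tsum_le_tsum step2
      _ = ENNReal.ofReal C₁ * ∑' j : ℤ × (Fin n → ℤ), gaussMeasure n (T j) :=
          ENNReal.tsum_mul_left
      _ ≤ ENNReal.ofReal C₁ * ((Nn : ℝ≥0∞) * gaussMeasure n O) :=
          mul_le_mul_right step3 _
      _ = ENNReal.ofReal (C₁ * Nn) * gaussMeasure n O := by
          rw [ENNReal.ofReal_mul hC₁0.le, ENNReal.ofReal_natCast, mul_assoc]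


end
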